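/- Let n ≥ 1 and let b be an integer with 0 ≤ b ≤ ⌊(n−1)/2⌋. Then every (2b+1)-dominating set of the rook's graph K_n □ K_n has cardinality at least (b+1)n − b. That is, if D ⊆ [0,n-1]² is such that every vertex (i,j) ∉ D has at least 2b+1 points of D in its row and column combined (excluding itself), then |D| ≥ (b+1)n − b. -/

import Mathlib

open Finset

lemma swap_filter_card9 (D : Finset (ℕ×ℕ)) (P : ℕ×ℕ → Prop) [DecidablePred P] :
    ((D.image Prod.swap).filter P).card = (D.filter (fun q => P q.swap)).card := by
  rw [Finset.filter_image, Finset.card_image_of_injective _ Prod.swap_injective]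

lemma aux9 (n b : ℕ) (hbn : 2*b+1 ≤ n)
    (D : Finset (ℕ × ℕ)) (hD : D ⊆ Finset.range n ×ˢ Finset.range n)
    (hdom : ∀ p ∈ Finset.range n ×ˢ Finset.range n, p ∉ D →
      2 * b + 1 ≤ (D.filter (fun q =>
        (q.1 = p.1 ∧ q.2 ≠ p.2) ∨ (q.2 = p.2 ∧ q.1 ≠ p.1))).card)
    (i0 : ℕ) (hi0 : i0 ∈ Finset.range n)
    (hr : (D.filter (fun q => q.1 = i0)).card ≤ b)
    (hc : ∀ j ∈ Finset.range n,
      (D.filter (fun q => q.1 = i0)).card ≤ (D.filter (fun q => q.2 = j)).card) :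
    (b + 1) * n - b ≤ D.card := by
  set r := (D.filter (fun q => q.1 = i0)).card with hrdef
  set C : ℕ → ℕ := fun j => (D.filter (fun q => q.2 = j)).card with hC
  have hsum : D.card = ∑ j ∈ Finset.range n, C j := by
    apply Finset.card_eq_sum_card_fiberwise
    intro x hx
    exact (Finset.mem_product.1 (hD hx)).2
  set A := (Finset.range n).filter (fun j => (i0, j) ∈ D) with hA
  set B := (Finset.range n).filter (fun j => (i0, j) ∉ D) with hB
  have hsplit : ∑ j ∈ Finset.range n, C j = ∑ j ∈ A, C j + ∑ j ∈ B, C j :=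
    (Finset.sum_filter_add_sum_filter_not _ _ _).symm
  have hAcard : A.card ≤ r := by
    apply Finset.card_le_card_of_injOn (fun j => (i0, j))
    · intro j hj
      simp only [hA, Finset.mem_coe, Finset.mem_filter] at hj
      simp [hj.2]
    · intro x _ y _ h
      exact (Prod.ext_iff.1 h).2
  have hAn : A.card + B.card = n := by
    rw [hA, hB]
    rw [Finset.card_filter_add_card_filter_not]
    · exact Finset.card_range n
  have hBcol : ∀ j ∈ B, 2*b+1 - r ≤ C j := by
    intro j hj
    simp only [hB, Finset.mem_filter, Finset.mem_range] at hj
    have hmem : (i0, j) ∈ Finset.range n ×ˢ Finset.range n := by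
      simp [Finset.mem_range.1 (Finset.mem_range.2 hj.1), hj.1]
      exact Finset.mem_range.1 hi0
    have h := hdom (i0, j) hmem hj.2
    have hsub : (D.filter (fun q =>
        (q.1 = (i0,j).1 ∧ q.2 ≠ (i0,j).2) ∨ (q.2 = (i0,j).2 ∧ q.1 ≠ (i0,j).1))).card
        ≤ r + C j := by
      calc _ ≤ ((D.filter (fun q => q.1 = i0)) ∪ (D.filter (fun q => q.2 = j))).card := by
              apply Finset.card_le_card
              intro q hq
              simp only [Finset.mem_filter] at hq
              rcases hq.2 with ⟨h1, _⟩ | ⟨h1, _⟩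
              · exact Finset.mem_union_left _ (Finset.mem_filter.2 ⟨hq.1, h1⟩)
              · exact Finset.mem_union_right _ (Finset.mem_filter.2 ⟨hq.1, h1⟩)
        _ ≤ r + C j := Finset.card_union_le _ _
    omega
  have hAcol : ∀ j ∈ A, r ≤ C j := by
    intro j hj
    exact hc j (Finset.mem_of_mem_filter j hj)
  have h1 : A.card * r ≤ ∑ j ∈ A, C j := by
    calc A.card * r = ∑ _j ∈ A, r := by rw [Finset.sum_const, smul_eq_mul]
      _ ≤ _ := Finset.sum_le_sum hAcol
  have h2 : B.card * (2*b+1-r) ≤ ∑ j ∈ B, C j := by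
    calc B.card * (2*b+1-r) = ∑ _j ∈ B, (2*b+1-r) := by rw [Finset.sum_const, smul_eq_mul]
      _ ≤ _ := Finset.sum_le_sum hBcol
  have key : A.card * r + (n - A.card) * (2*b+1-r) ≤ D.card := by
    have hBn : B.card = n - A.card := by omega
    rw [hBn] at h2
    omega
  set a := A.card
  have har : a ≤ r := hAcard
  have hfin : (b+1)*n - b ≤ a*r + (n-a)*(2*b+1-r) := by
    have h1 : a ≤ n := by omega
    have h2 : r ≤ 2*b+1 := by omega
    have h3 : b ≤ (b+1)*n := by nlinarith
    zify [h1, h2, h3, hr]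
    nlinarith [mul_nonneg (by omega : (0:ℤ) ≤ (n:ℤ) - (2*b+1)) (by omega : (0:ℤ) ≤ (b:ℤ) - r),
      mul_nonneg (by omega : (0:ℤ) ≤ (r:ℤ) - a) (by omega : (0:ℤ) ≤ 2*(b:ℤ)+1 - 2*r),
      sq_nonneg ((b:ℤ) - r)]
  omega

/-- every `(2b+1)`-dominating set of the rook's graph `K_n □ K_n`
has cardinality at least `(b+1)n − b`, provided `0 ≤ b ≤ ⌊(n−1)/2⌋`. -/
theorem stmt_9 (n b : ℕ) (hn : 1 ≤ n) (hb : b ≤ (n - 1) / 2)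
    (D : Finset (ℕ × ℕ)) (hD : D ⊆ Finset.range n ×ˢ Finset.range n)
    (hdom : ∀ p ∈ Finset.range n ×ˢ Finset.range n, p ∉ D →
      2 * b + 1 ≤ (D.filter (fun q =>
        (q.1 = p.1 ∧ q.2 ≠ p.2) ∨ (q.2 = p.2 ∧ q.1 ≠ p.1))).card) :
    (b + 1) * n - b ≤ D.card := by
  have hbn : 2*b+1 ≤ n := by omega
  set R : ℕ → ℕ := fun i => (D.filter (fun q => q.1 = i)).card with hR
  set C : ℕ → ℕ := fun j => (D.filter (fun q => q.2 = j)).card with hCd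
  obtain ⟨i0, hi0, hi0min⟩ := Finset.exists_min_image (Finset.range n) R
    ⟨0, Finset.mem_range.2 hn⟩
  obtain ⟨j0, hj0, hj0min⟩ := Finset.exists_min_image (Finset.range n) C
    ⟨0, Finset.mem_range.2 hn⟩
  rcases le_or_gt (b+1) (R i0) with hbig | hsmall
  · -- every row has ≥ b+1 points
    have hsum : D.card = ∑ i ∈ Finset.range n, R i := by
      apply Finset.card_eq_sum_card_fiberwise
      intro x hx
      exact (Finset.mem_product.1 (hD hx)).1
    have hge : (b+1) * n ≤ ∑ i ∈ Finset.range n, R i := by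
      calc (b+1) * n = ∑ _i ∈ Finset.range n, (b+1) := by
            rw [Finset.sum_const, smul_eq_mul, Finset.card_range, mul_comm]
        _ ≤ _ := Finset.sum_le_sum (fun i hi => le_trans hbig (hi0min i hi))
    omega
  · rcases le_total (R i0) (C j0) with hrc | hcr
    · -- min row ≤ min col : apply aux9 directly
      apply aux9 n b hbn D hD hdom i0 hi0 (by exact Nat.lt_succ_iff.mp hsmall)
      intro j hj
      exact le_trans hrc (hj0min j hj)
    · -- min col ≤ min row : apply aux9 to the swapped set
      set D' := D.image Prod.swap with hD'
      have hcard : D'.card = D.card := Finset.card_image_of_injective _ Prod.swap_injective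
      have hD'sub : D' ⊆ Finset.range n ×ˢ Finset.range n := by
        intro p hp
        simp only [hD', Finset.mem_image] at hp
        obtain ⟨q, hq, rfl⟩ := hp
        have := Finset.mem_product.1 (hD hq)
        exact Finset.mem_product.2 ⟨this.2, this.1⟩
      have hmemswap : ∀ p : ℕ × ℕ, p ∈ D' ↔ p.swap ∈ D := by
        intro p
        simp only [hD', Finset.mem_image]
        constructor
        · rintro ⟨q, hq, rfl⟩; simpa using hq
        · intro h; exact ⟨p.swap, h, by simp⟩
      have hdom' : ∀ p ∈ Finset.range n ×ˢ Finset.range n, p ∉ D' →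
          2 * b + 1 ≤ (D'.filter (fun q =>
            (q.1 = p.1 ∧ q.2 ≠ p.2) ∨ (q.2 = p.2 ∧ q.1 ≠ p.1))).card := by
        intro p hp hpD
        rw [swap_filter_card9]
        have hps : p.swap ∈ Finset.range n ×ˢ Finset.range n := by
          have := Finset.mem_product.1 hp
          exact Finset.mem_product.2 ⟨this.2, this.1⟩
        have hpsD : p.swap ∉ D := fun h => hpD ((hmemswap p).2 h)
        have h := hdom p.swap hps hpsD
        have heq : D.filter (fun q => (q.swap.1 = p.1 ∧ q.swap.2 ≠ p.2) ∨
              (q.swap.2 = p.2 ∧ q.swap.1 ≠ p.1)) =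
            D.filter (fun q => (q.1 = p.swap.1 ∧ q.2 ≠ p.swap.2) ∨
              (q.2 = p.swap.2 ∧ q.1 ≠ p.swap.1)) := by
          apply Finset.filter_congr
          intro q _
          simp only [Prod.fst_swap, Prod.snd_swap]
          tauto
        rw [heq]
        exact h
      have hr' : (D'.filter (fun q => q.1 = j0)).card ≤ b := by
        rw [swap_filter_card9]
        simp only [Prod.fst_swap]
        calc (D.filter (fun q => q.2 = j0)).card = C j0 := rfl
          _ ≤ R i0 := hcr
          _ ≤ b := by omega
      have hres := aux9 n b hbn D' hD'sub hdom' j0 hj0 hr' ?_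
      · omega
      · intro j hj
        rw [swap_filter_card9, swap_filter_card9]
        simp only [Prod.fst_swap, Prod.snd_swap]
        calc (D.filter (fun q => q.2 = j0)).card = C j0 := rfl
          _ ≤ R i0 := hcr
          _ ≤ R j := hi0min j hj
          _ = (D.filter (fun q => q.1 = j)).card := rfl
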